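/- The elementary three-ququart hypergraph state |H₄⟩, defined by coefficients c_{ijk} = ω^{ijk} for i,j,k ∈ {0,1,2,3} where ω = e^{2πi/4} = i, is not SLOCC-equivalent to the three-ququart GHZ state |000⟩ + |111⟩ + |222⟩ + |333⟩. -/
import Mathlib


/-- The elementary three-ququart hypergraph state `|H₄⟩`, with coefficients
`ω^{ijk}` where `ω = e^{2πi/4} = i`. -/
noncomputable def H4 : Fin 4 × Fin 4 × Fin 4 → ℂ :=
  fun x => Complex.I ^ ((x.1 : ℕ) * (x.2.1 : ℕ) * (x.2.2 : ℕ))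

/-- The three-ququart GHZ state `|000⟩ + |111⟩ + |222⟩ + |333⟩`. -/
noncomputable def GHZ44 : Fin 4 × Fin 4 × Fin 4 → ℂ :=
  fun x => if x = (0, 0, 0) ∨ x = (1, 1, 1) ∨ x = (2, 2, 2) ∨ x = (3, 3, 3) then 1 else 0

/-- `|H₄⟩` is not SLOCC-equivalent to the three-ququart GHZ state. -/
theorem h4_not_slocc_equiv_ghz :
    ¬ ∃ A₁ A₂ A₃ : Matrix (Fin 4) (Fin 4) ℂ,
        IsUnit A₁ ∧ IsUnit A₂ ∧ IsUnit A₃ ∧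
        ∀ i j k : Fin 4,
          GHZ44 (i, j, k) =
            ∑ a : Fin 4, ∑ b : Fin 4, ∑ c : Fin 4,
              A₁ i a * A₂ j b * A₃ k c * H4 (a, b, c) := by
  rintro ⟨A₁, A₂, A₃, h1, h2, h3, heq⟩
  obtain ⟨u₁, hu₁⟩ := h1
  obtain ⟨u₂, hu₂⟩ := h2
  obtain ⟨u₃, hu₃⟩ := h3
  set B₁ : Matrix (Fin 4) (Fin 4) ℂ := ↑u₁⁻¹ with hB₁
  set B₂ : Matrix (Fin 4) (Fin 4) ℂ := ↑u₂⁻¹ with hB₂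
  set B₃ : Matrix (Fin 4) (Fin 4) ℂ := ↑u₃⁻¹ with hB₃
  have hBA₁ : B₁ * A₁ = 1 := by rw [hB₁, ← hu₁]; exact u₁.inv_mul
  have hBA₂ : B₂ * A₂ = 1 := by rw [hB₂, ← hu₂]; exact u₂.inv_mul
  have hBA₃ : B₃ * A₃ = 1 := by rw [hB₃, ← hu₃]; exact u₃.inv_mul
  set N : Fin 4 → Matrix (Fin 4) (Fin 4) ℂ :=
    fun i => Matrix.of fun b c => ∑ a : Fin 4, A₁ i a * H4 (a, b, c) with hN
  have hG : ∀ i j k : Fin 4, GHZ44 (i, j, k) = Matrix.single i i (1:ℂ) j k := by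
    intro i j k
    fin_cases i <;> fin_cases j <;> fin_cases k <;>
      norm_num [GHZ44, Matrix.single, Prod.ext_iff, Fin.ext_iff] <;> decide
  have hslice : ∀ i, Matrix.single i i (1:ℂ) = A₂ * N i * A₃.transpose := by
    intro i
    ext j k
    rw [← hG i j k, heq i j k]
    simp only [Matrix.mul_apply, Matrix.transpose_apply, hN, Matrix.of_apply,
      Fin.sum_univ_four]
    ring
  have hfac : ∀ i b c, N i b c = B₂ b i * B₃ c i := by
    intro i b c
    have key : N i = B₂ * Matrix.single i i (1:ℂ) * B₃.transpose := by
      rw [hslice i]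
      symm
      calc B₂ * (A₂ * N i * A₃.transpose) * B₃.transpose
          = (B₂ * A₂) * N i * (A₃.transpose * B₃.transpose) := by
            simp only [Matrix.mul_assoc]
        _ = N i := by
            rw [hBA₂, ← Matrix.transpose_mul, hBA₃, Matrix.transpose_one,
              Matrix.mul_one, Matrix.one_mul]
    rw [key]
    fin_cases i <;>
      simp [Matrix.mul_apply, Matrix.transpose_apply, Matrix.single,
        Fin.sum_univ_four]
  have hI2 : Complex.I ^ 2 = -1 := Complex.I_sq
  have hI3 : Complex.I ^ 3 = -Complex.I := by rw [pow_succ, hI2]; ring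
  have hI4 : Complex.I ^ 4 = 1 := by
    rw [pow_succ, hI3]; simp [Complex.I_mul_I]
  have hI6 : Complex.I ^ 6 = -1 := by
    have h : Complex.I ^ 6 = Complex.I ^ 4 * Complex.I ^ 2 := by ring
    rw [h, hI4, hI2, one_mul]
  have hI8 : Complex.I ^ 8 = 1 := by
    have h : Complex.I ^ 8 = Complex.I ^ 4 * Complex.I ^ 4 := by ring
    rw [h, hI4, one_mul]
  have hI12 : Complex.I ^ 12 = 1 := by
    have h : Complex.I ^ 12 = Complex.I ^ 8 * Complex.I ^ 4 := by ring
    rw [h, hI8, hI4, one_mul]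
  have hv3 : ((3 : Fin 4) : ℕ) = 3 := rfl
  have hrow : ∀ i : Fin 4, A₁ i 1 + A₁ i 3 = 0 := by
    intro i
    have e00 : N i 0 0 = A₁ i 0 + A₁ i 1 + A₁ i 2 + A₁ i 3 := by
      simp [hN, H4, Fin.sum_univ_four]
    have e01 : N i 0 1 = A₁ i 0 + A₁ i 1 + A₁ i 2 + A₁ i 3 := by
      simp [hN, H4, Fin.sum_univ_four]
    have e20 : N i 2 0 = A₁ i 0 + A₁ i 1 + A₁ i 2 + A₁ i 3 := by
      simp [hN, H4, Fin.sum_univ_four]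
    have e21 : N i 2 1 = A₁ i 0 - A₁ i 1 + A₁ i 2 - A₁ i 3 := by
      simp only [hN, H4, Fin.sum_univ_four, Matrix.of_apply]
      norm_num [hI2, hI4, hI6, hv3]
      ring
    have e12 : N i 1 2 = A₁ i 0 - A₁ i 1 + A₁ i 2 - A₁ i 3 := by
      simp only [hN, H4, Fin.sum_univ_four, Matrix.of_apply]
      norm_num [hI2, hI4, hI6, hv3]
      ring
    have e11 : N i 1 1 = A₁ i 0 + A₁ i 1 * Complex.I - A₁ i 2 - A₁ i 3 * Complex.I := by
      simp only [hN, H4, Fin.sum_univ_four, Matrix.of_apply]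
      norm_num [hI2, hI3, hv3]
      ring
    have e22 : N i 2 2 = A₁ i 0 + A₁ i 1 + A₁ i 2 + A₁ i 3 := by
      simp only [hN, H4, Fin.sum_univ_four, Matrix.of_apply]
      norm_num [hI4, hI8, hI12, hv3]
    have m1 : N i 0 0 * N i 2 1 = N i 0 1 * N i 2 0 := by
      rw [hfac i 0 0, hfac i 2 1, hfac i 0 1, hfac i 2 0]; ring
    have m2 : N i 1 2 * N i 2 1 = N i 1 1 * N i 2 2 := by
      rw [hfac i 1 2, hfac i 2 1, hfac i 1 1, hfac i 2 2]; ring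
    rw [e00, e21, e01, e20] at m1
    rw [e12, e21, e11, e22] at m2
    set a : ℂ := A₁ i 0 + A₁ i 1 + A₁ i 2 + A₁ i 3 with ha
    set C : ℂ := A₁ i 0 - A₁ i 1 + A₁ i 2 - A₁ i 3 with hC
    have haC : a = C := by
      by_cases h0 : a = 0
      · have hC0 : C = 0 := by
          have h' := m2
          rw [h0, mul_zero] at h'
          exact mul_self_eq_zero.mp h'
        rw [h0, hC0]
      · exact (mul_left_cancel₀ h0 m1).symm
    rw [ha, hC] at haC
    linear_combination haC / 2
  set w : Fin 4 → ℂ := fun a => if a = 1 then 1 else if a = 3 then 1 else 0 with hw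
  have hAw : A₁.mulVec w = 0 := by
    funext i
    simp only [Matrix.mulVec, dotProduct, hw, Fin.sum_univ_four, Pi.zero_apply]
    norm_num [Fin.ext_iff, hv3]
    linear_combination hrow i
  have hw0 : w = 0 := by
    have h := congrArg B₁.mulVec hAw
    rw [Matrix.mulVec_mulVec, hBA₁, Matrix.one_mulVec, Matrix.mulVec_zero] at h
    exact h
  have := congrFun hw0 1
  simp [hw] at this
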